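/- For any x ∈ D_n with canonic decomposition x = (1,u,0,v), starting at x and flipping bits at the positions listed in σ(x) one after the other yields the final string y = (u,0,1,v), which lies in D_n^-. -/

import Mathlib

/-- A Dyck word: equally many ones (`true`) and zeros (`false`), and
every prefix has at least as many ones as zeros. -/
def IsDyck (x : List Bool) : Prop :=
  x.count true = x.count false ∧
  ∀ k : ℕ, (x.take k).count false ≤ (x.take k).count true

/-- `DyckN n` is the set of Dyck words of length `2n`. -/
def DyckN (n : ℕ) : Set (List Bool) :=
  {x | x.length = 2 * n ∧ IsDyck x}

/-- `SigmaA a x' s` holds iff the bitflip sequence `σ_a(x')` of the Dyck word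
`x'` starting at position `a` (positions are 1-indexed) equals `s`:
`σ_a(()) = ()`, and for `x' = (1,u',0,v')` with `b = a + |u'| + 1`,
`σ_a(x') = (b, a, σ_{a+1}(u'), a-1, b, σ_{b+1}(v'))`. -/
inductive SigmaA : ℕ → List Bool → List ℕ → Prop
  | nil (a : ℕ) : SigmaA a [] []
  | cons (a : ℕ) (u v : List Bool) (su sv : List ℕ) :
      IsDyck u → IsDyck v → SigmaA (a + 1) u su →
      SigmaA (a + u.length + 2) v sv →
      SigmaA a (true :: u ++ false :: v)
        ((a + u.length + 1) :: a :: su ++ (a - 1) :: (a + u.length + 1) :: sv)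

/-- `SigmaSeq x s` holds iff `σ(x) = s`, where for `x` with canonic decomposition
`x = (1,u,0,v)`, `a = 1`, `b = |u| + 2`, one has `σ(x) = (b, a, σ_{a+1}(u))`. -/
def SigmaSeq (x : List Bool) (s : List ℕ) : Prop :=
  ∃ u v su, IsDyck u ∧ IsDyck v ∧ x = true :: u ++ false :: v ∧
    SigmaA 2 u su ∧ s = (u.length + 2) :: 1 :: su

/-- `D_n⁻`: bitstrings of length `2n` with exactly `n` ones having exactly one
prefix in which the number of ones is strictly smaller than the number of zeros. -/
def DyckMinusN (n : ℕ) : Set (List Bool) :=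
  {x | x.length = 2 * n ∧ x.count true = n ∧
    ((Finset.range (2 * n + 1)).filter
      (fun k => (x.take k).count true < (x.take k).count false)).card = 1}

/-- Flip the bit of `x` at the (1-indexed) position `p`. -/
def flipAt (x : List Bool) (p : ℕ) : List Bool :=
  x.set (p - 1) (!(x.getD (p - 1) false))

/-- Apply a sequence of bitflips to `x`, one after the other. -/
def applyFlips (x : List Bool) (s : List ℕ) : List Bool :=
  s.foldl flipAt x

lemma flip_mid (p q : List Bool) (c : Bool) (n : ℕ) (h : n = p.length + 1) :
    flipAt (p ++ c :: q) n = p ++ (!c) :: q := by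
  subst h
  induction p with
  | nil => simp [flipAt]
  | cons h t ih => simpa [flipAt, List.getD] using ih

lemma applyFlips_cons (x : List Bool) (p : ℕ) (s : List ℕ) :
    applyFlips x (p :: s) = applyFlips (flipAt x p) s := rfl

lemma applyFlips_append (x : List Bool) (s₁ s₂ : List ℕ) :
    applyFlips x (s₁ ++ s₂) = applyFlips (applyFlips x s₁) s₂ := List.foldl_append

lemma sigmaA_flips : ∀ {a : ℕ} {u : List Bool} {su : List ℕ}, SigmaA a u su →
    ∀ p q : List Bool, a = p.length + 2 →
    applyFlips (p ++ false :: u ++ q) su = p ++ u ++ false :: q := by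
  intro a u su h
  induction h with
  | nil a => intro p q _; simp [applyFlips]
  | cons a u v su sv hu hv h1 h2 ih1 ih2 =>
    intro p q ha
    subst ha
    have e1 : applyFlips ((p ++ false :: true :: u) ++ false :: (v ++ q))
        ((p.length + 2 + u.length + 1) :: (p.length + 2) :: su)
        = (p ++ [false]) ++ u ++ false :: (true :: (v ++ q)) := by
      rw [applyFlips_cons, flip_mid _ _ _ _ (by first | omega | (simp only [List.length_append, List.length_cons, List.length_nil]; omega) | simp only [List.length_append, List.length_cons, List.length_nil])]
      rw [applyFlips_cons]
      rw [show (p ++ false :: true :: u) ++ (!false) :: (v ++ q)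
          = (p ++ [false]) ++ true :: (u ++ true :: (v ++ q)) from by simp]
      rw [flip_mid _ _ _ _ (by first | omega | (simp only [List.length_append, List.length_cons, List.length_nil]; omega) | simp only [List.length_append, List.length_cons, List.length_nil])]
      rw [show (p ++ [false]) ++ (!true) :: (u ++ true :: (v ++ q))
          = (p ++ [false]) ++ false :: u ++ (true :: (v ++ q)) from by simp]
      exact ih1 _ _ (by simp)
    have e2 : applyFlips ((p ++ [false]) ++ u ++ false :: (true :: (v ++ q)))
        ((p.length + 2 - 1) :: (p.length + 2 + u.length + 1) :: sv)
        = p ++ (true :: u ++ false :: v) ++ false :: q := by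
      rw [applyFlips_cons]
      rw [show (p ++ [false]) ++ u ++ false :: (true :: (v ++ q))
          = p ++ false :: (u ++ false :: (true :: (v ++ q))) from by simp]
      rw [flip_mid _ _ _ _ (by first | omega | (simp only [List.length_append, List.length_cons, List.length_nil]; omega) | simp only [List.length_append, List.length_cons, List.length_nil])]
      rw [applyFlips_cons]
      rw [show p ++ (!false) :: (u ++ false :: (true :: (v ++ q)))
          = (p ++ true :: u ++ [false]) ++ true :: (v ++ q) from by simp]
      rw [flip_mid _ _ _ _ (by first | omega | (simp only [List.length_append, List.length_cons, List.length_nil]; omega) | simp only [List.length_append, List.length_cons, List.length_nil])]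
      rw [show (p ++ true :: u ++ [false]) ++ (!true) :: (v ++ q)
          = (p ++ true :: u ++ [false]) ++ false :: v ++ q from by simp]
      rw [ih2 _ _ (by first | omega | (simp only [List.length_append, List.length_cons, List.length_nil]; omega) | simp only [List.length_append, List.length_cons, List.length_nil])]
      simp
    rw [applyFlips_append]
    rw [show p ++ false :: (true :: u ++ false :: v) ++ q
        = (p ++ false :: true :: u) ++ false :: (v ++ q) from by simp]
    rw [e1, e2]

lemma dyck_not_shorter {u u' : List Bool} {v v' : List Bool}
    (hu : IsDyck u) (hu' : IsDyck u')
    (h : u ++ false :: v = u' ++ false :: v') (hlt : u.length < u'.length) : False := by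
  have htake : (u ++ false :: v).take (u.length + 1) = u ++ [false] := by
    rw [List.take_append]
    simp
  have htake' : (u' ++ false :: v').take (u.length + 1) = u'.take (u.length + 1) := by
    rw [List.take_append]
    have : u.length + 1 - u'.length = 0 := by omega
    simp [this]
  have h2 := hu'.2 (u.length + 1)
  rw [← htake', ← h, htake] at h2
  have hcu : u.count true = u.count false := hu.1
  simp [List.count_append] at h2
  omega

lemma dyck_decomp_unique {u v u' v' : List Bool}
    (hu : IsDyck u) (hu' : IsDyck u')
    (h : u ++ false :: v = u' ++ false :: v') : u = u' ∧ v = v' := by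
  have hlen : u.length = u'.length := by
    rcases Nat.lt_trichotomy u.length u'.length with h1 | h1 | h1
    · exact absurd (dyck_not_shorter hu hu' h h1) id
    · exact h1
    · exact absurd (dyck_not_shorter hu' hu h.symm h1) id
  obtain ⟨h1, h2⟩ := List.append_inj h hlen
  exact ⟨h1, by injection h2⟩

lemma mem_dyckMinus (n : ℕ) (u v : List Bool)
    (hu : IsDyck u) (hv : IsDyck v)
    (hlen : u.length + v.length + 2 = 2 * n)
    (hcnt : u.count true + v.count true + 1 = n) :
    (u ++ false :: true :: v).length = 2 * n ∧ (u ++ false :: true :: v).count true = n ∧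
    ((Finset.range (2 * n + 1)).filter
      (fun k => ((u ++ false :: true :: v).take k).count true
        < ((u ++ false :: true :: v).take k).count false)).card = 1 := by
  refine ⟨by simp; omega, by simp [List.count_append]; omega, ?_⟩
  have hset : ((Finset.range (2 * n + 1)).filter
      (fun k => ((u ++ false :: true :: v).take k).count true
        < ((u ++ false :: true :: v).take k).count false)) = {u.length + 1} := by
    ext k
    simp only [Finset.mem_filter, Finset.mem_range, Finset.mem_singleton]
    constructor
    · rintro ⟨hk, hlt⟩
      by_contra hne
      rw [List.take_append] at hlt
      rcases Nat.lt_or_ge k (u.length + 1) with hk1 | hk1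
      · -- k ≤ u.length
        have : k - u.length = 0 := by omega
        rw [this] at hlt
        simp at hlt
        exact absurd hlt (not_lt.2 (hu.2 k))
      · -- k ≥ u.length + 2 since k ≠ u.length + 1
        have hk2 : 2 ≤ k - u.length := by omega
        obtain ⟨m, hm⟩ : ∃ m, k - u.length = m + 2 := ⟨k - u.length - 2, by omega⟩
        rw [hm] at hlt
        have htk : u.take k = u := List.take_of_length_le (by omega)
        rw [htk] at hlt
        simp [List.count_append, List.count_cons] at hlt
        have := hv.2 m
        have hcu : u.count true = u.count false := hu.1
        omega
    · rintro h
      subst h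
      constructor
      · omega
      · rw [List.take_append]
        have : u.length + 1 - u.length = 1 := by omega
        rw [this, List.take_of_length_le (by omega)]
        simp [List.count_append]
        have := hu.1
        omega
  rw [hset]
  simp

lemma count_tf (x : List Bool) : x.count true + x.count false = x.length := by
  induction x with
  | nil => simp
  | cons h t ih => cases h <;> simp [List.count_cons] <;> omega

/-- For `x ∈ D_n` with canonic decomposition `x = (1,u,0,v)`, flipping the bits
of `x` at the positions listed in `σ(x)`, one after the other, yields the final
string `y = (u,0,1,v)`, which lies in `D_n⁻`. -/
theorem sigma_endpoint (n : ℕ) (x u v : List Bool) (s : List ℕ)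
    (hx : x ∈ DyckN n) (hu : IsDyck u) (hv : IsDyck v)
    (hdec : x = true :: u ++ false :: v) (hs : SigmaSeq x s) :
    applyFlips x s = u ++ false :: true :: v ∧
      (u ++ false :: true :: v) ∈ DyckMinusN n := by
  obtain ⟨hxlen, hxd⟩ := hx
  obtain ⟨u', v', su, hu', hv', hdec', hsig, hseq⟩ := hs
  have heq : u ++ false :: v = u' ++ false :: v' := by
    have h0 := hdec.symm.trans hdec'
    simpa using h0
  obtain ⟨huu, hvv⟩ := dyck_decomp_unique hu hu' heq
  subst huu; subst hvv
  have hlen2 : u.length + v.length + 2 = 2 * n := by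
    rw [hdec] at hxlen; simp at hxlen; omega
  have hcnt : u.count true + v.count true + 1 = n := by
    have h1 := count_tf x
    have h2 := hxd.1
    have h3 : x.count true = n := by omega
    rw [hdec] at h3
    have hcu := hu.1
    have hcv := hv.1
    simp [List.count_append, List.count_cons] at h3
    omega
  have hflip : applyFlips x s = u ++ false :: true :: v := by
    rw [hdec, hseq, applyFlips_cons]
    rw [flip_mid _ _ _ _ (by simp)]
    rw [applyFlips_cons]
    rw [show (true :: u) ++ (!false) :: v = ([] : List Bool) ++ true :: (u ++ true :: v)
        from by simp]
    rw [flip_mid _ _ _ _ (by simp)]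
    rw [show ([] : List Bool) ++ (!true) :: (u ++ true :: v)
        = ([] : List Bool) ++ (false :: u) ++ (true :: v) from by simp]
    rw [sigmaA_flips hsig [] (true :: v) (by simp)]
    simp
  refine ⟨hflip, ?_⟩
  exact mem_dyckMinus n u v hu hv hlen2 hcnt
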